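/- In ℂ[x][y,z,u] with p = yu+z², v = xz+yp, w = x²u−2xzp−yp², the intersection of ℂ[y,v,w] with the ideal (x)·ℂ[x][y,z,u] equals the intersection of ℂ[y,v,w] with (x²)·ℂ[x][y,z,u], and both equal the ideal (yw+v²)·ℂ[y,v,w]. -/

import Mathlib

open MvPolynomial

noncomputable section

def q3 : MvPolynomial (Fin 3) ℂ := X 0 * X 2 + (X 1)^2

def Good (d : Fin 3 →₀ ℕ) : Prop := d 0 = 0 ∨ d 2 = 0

lemma div3_monomial (a : ℕ) : ∀ (d : Fin 3 →₀ ℕ) (c : ℂ), d 0 ≤ a →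
    ∃ G R : MvPolynomial (Fin 3) ℂ,
      (monomial d c : MvPolynomial (Fin 3) ℂ) = q3 * G + R ∧ ∀ d' ∈ R.support, Good d' := by
  induction a with
  | zero =>
    intro d c h
    refine ⟨0, monomial d c, by ring, ?_⟩
    intro d' hd'
    have := MvPolynomial.support_monomial_subset hd'
    simp at this
    subst this
    exact Or.inl (by omega)
  | succ n ih =>
    intro d c h
    by_cases hg : Good d
    · refine ⟨0, monomial d c, by ring, ?_⟩
      intro d' hd'
      have := MvPolynomial.support_monomial_subset hd'
      simp at this
      subst this
      exact hg
    · have h0 : d 0 ≠ 0 := fun hh => hg (Or.inl hh)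
      have h2 : d 2 ≠ 0 := fun hh => hg (Or.inr hh)
      set d' : Fin 3 →₀ ℕ := d - Finsupp.single 0 1 - Finsupp.single 2 1 with hd'
      have hdec : d = d' + Finsupp.single 0 1 + Finsupp.single 2 1 := by
        ext i
        fin_cases i <;>
          simp [hd', Finsupp.single_apply, Finsupp.tsub_apply] <;> omega
      -- monomial d c = (X 0 * X 2) * monomial d' c
      have hmon : (monomial d c : MvPolynomial (Fin 3) ℂ)
          = (X 0 * X 2) * monomial d' c := by
        rw [hdec, X, X, monomial_mul, monomial_mul, one_mul]
        congr 1
        · abel_nf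
        · exact (one_mul c).symm
      -- key identity: (X0 X2) m' = q3 m' - X1^2 m'
      have hq : (monomial d c : MvPolynomial (Fin 3) ℂ)
          = q3 * monomial d' c + monomial (d' + Finsupp.single 1 2) (-c) := by
        have h1 : ((X 1)^2 : MvPolynomial (Fin 3) ℂ) * monomial d' c
            = monomial (d' + Finsupp.single 1 2) c := by
          rw [X_pow_eq_monomial, monomial_mul, one_mul, add_comm]
        rw [hmon, q3, add_mul, map_neg, h1]
        ring
      have hle : ((d' + Finsupp.single 1 2 : Fin 3 →₀ ℕ)) 0 ≤ n := by
        have h3 : ((d' + Finsupp.single 1 2 : Fin 3 →₀ ℕ)) 0 = d' 0 := by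
          rw [Finsupp.add_apply, Finsupp.single_apply]; simp
        have h4 : d' 0 = d 0 - 1 := by
          simp [hd', Finsupp.tsub_apply, Finsupp.single_apply]
        omega
      obtain ⟨G, R, hGR, hRS⟩ := ih (d' + Finsupp.single 1 2) (-c) hle
      exact ⟨monomial d' c + G, R, by rw [hq, hGR]; ring, hRS⟩

lemma div3 (F : MvPolynomial (Fin 3) ℂ) :
    ∃ G R : MvPolynomial (Fin 3) ℂ, F = q3 * G + R ∧ ∀ d' ∈ R.support, Good d' := by
  induction F using MvPolynomial.induction_on' with
  | monomial d c => exact div3_monomial (d 0) d c le_rfl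
  | add p q hp hq =>
    obtain ⟨G1, R1, h1, hS1⟩ := hp
    obtain ⟨G2, R2, h2, hS2⟩ := hq
    refine ⟨G1 + G2, R1 + R2, by rw [h1, h2]; ring, ?_⟩
    intro d hd
    have := MvPolynomial.support_add (p := R1) (q := R2) hd
    rcases Finset.mem_union.mp this with h | h
    · exact hS1 d h
    · exact hS2 d h

def eexp (d : Fin 3 →₀ ℕ) : Fin 2 →₀ ℕ :=
  Finsupp.single 0 (d 0 + 2 * d 1 + 3 * d 2) + Finsupp.single 1 (d 1 + 2 * d 2)

lemma eexp_inj {d d' : Fin 3 →₀ ℕ} (hd : Good d) (hd' : Good d')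
    (h : eexp d = eexp d') : d = d' := by
  have h0 : eexp d 0 = eexp d' 0 := by rw [h]
  have h1 : eexp d 1 = eexp d' 1 := by rw [h]
  simp [eexp, Finsupp.single_apply] at h0 h1
  rcases hd with g | g <;> rcases hd' with g' | g' <;>
    (ext i; fin_cases i <;> simp <;> omega)

def chi : MvPolynomial (Fin 3) ℂ →ₐ[ℂ] MvPolynomial (Fin 2) ℂ :=
  aeval ![X 0, X 0 ^ 2 * X 1, -(X 0 ^ 3 * X 1 ^ 2)]

lemma chi_monomial (d : Fin 3 →₀ ℕ) (c : ℂ) :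
    chi (monomial d c) = monomial (eexp d) ((-1) ^ (d 2) * c) := by
  rw [chi, aeval_monomial]
  rw [Finsupp.prod_fintype _ _ (fun i => pow_zero _)]
  rw [monomial_eq, Finsupp.prod_fintype _ _ (fun i => pow_zero _)]
  simp only [Fin.prod_univ_three, Fin.prod_univ_two, eexp]
  simp [Finsupp.single_apply, algebraMap_eq]
  ring

lemma chi_zero (R : MvPolynomial (Fin 3) ℂ) (hR : ∀ d ∈ R.support, Good d)
    (h : chi R = 0) : R = 0 := by
  by_contra hne
  obtain ⟨d0, hd0⟩ := MvPolynomial.support_nonempty.mpr hne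
  have hrepr : R = ∑ d ∈ R.support, monomial d (coeff d R) :=
    (MvPolynomial.support_sum_monomial_coeff R).symm
  have hchi : (0 : MvPolynomial (Fin 2) ℂ)
      = ∑ d ∈ R.support, monomial (eexp d) ((-1) ^ (d 2) * coeff d R) := by
    rw [← h]
    conv_lhs => rw [hrepr]
    rw [map_sum]
    exact Finset.sum_congr rfl fun d _ => chi_monomial d (coeff d R)
  have hc := congrArg (coeff (eexp d0)) hchi
  rw [MvPolynomial.coeff_sum] at hc
  simp only [coeff_monomial] at hc
  rw [Finset.sum_eq_single d0] at hc
  · rw [if_pos rfl] at hc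
    have hne1 : ((-1 : ℂ)) ^ (d0 2) ≠ 0 := pow_ne_zero _ (by norm_num)
    have : coeff d0 R = 0 := by
      rcases mul_eq_zero.mp hc.symm with hc' | hc'
      · exact absurd hc' hne1
      · exact hc'
    exact (MvPolynomial.mem_support_iff.mp hd0) this
  · intro d hd hne'
    rw [if_neg]
    intro heq
    exact hne' (eexp_inj (hR d hd) (hR d0 hd0) heq)
  · intro hd
    exact absurd hd0 hd

/-- In ℂ[x][y,z,u] ≅ ℂ[x,y,z,u], with p = yu+z², v = xz+yp, w = x²u−2xzp−yp²:
ℂ[y,v,w] ∩ (x) = ℂ[y,v,w] ∩ (x²) = (yw+v²)·ℂ[y,v,w]. -/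
theorem stmt8 :
    let x : MvPolynomial (Fin 4) ℂ := X 0
    let y : MvPolynomial (Fin 4) ℂ := X 1
    let z : MvPolynomial (Fin 4) ℂ := X 2
    let u : MvPolynomial (Fin 4) ℂ := X 3
    let p := y * u + z ^ 2
    let v := x * z + y * p
    let w := x ^ 2 * u - 2 * x * z * p - y * p ^ 2
    let A := Algebra.adjoin ℂ ({y, v, w} : Set (MvPolynomial (Fin 4) ℂ))
    ({f | f ∈ A ∧ f ∈ Ideal.span ({x} : Set (MvPolynomial (Fin 4) ℂ))} =
        {f | f ∈ A ∧ f ∈ Ideal.span ({x ^ 2} : Set (MvPolynomial (Fin 4) ℂ))}) ∧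
      {f | f ∈ A ∧ f ∈ Ideal.span ({x} : Set (MvPolynomial (Fin 4) ℂ))} =
        {f | ∃ g ∈ A, f = (y * w + v ^ 2) * g} := by
  intro x y z u p v w A
  have hx : x = X 0 := rfl
  have hy : y = X 1 := rfl
  have hz : z = X 2 := rfl
  have hu : u = X 3 := rfl
  have hp : p = y * u + z ^ 2 := rfl
  have hv : v = x * z + y * p := rfl
  have hw : w = x ^ 2 * u - 2 * x * z * p - y * p ^ 2 := rfl
  have hAdef : A = Algebra.adjoin ℂ ({y, v, w} : Set (MvPolynomial (Fin 4) ℂ)) := rfl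
  -- the key identity
  have hyvw : y * w + v ^ 2 = x ^ 2 * p := by rw [hw, hv, hp]; ring
  -- A is the range of aeval
  have hset : ({y, v, w} : Set (MvPolynomial (Fin 4) ℂ)) = Set.range ![y, v, w] := by
    ext t
    simp only [Set.mem_insert_iff, Set.mem_singleton_iff, Set.mem_range]
    constructor
    · rintro (rfl | rfl | rfl)
      exacts [⟨0, rfl⟩, ⟨1, rfl⟩, ⟨2, rfl⟩]
    · rintro ⟨i, rfl⟩
      fin_cases i <;> simp
  have hA : A = (aeval ![y, v, w] : MvPolynomial (Fin 3) ℂ →ₐ[ℂ] _).range := by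
    rw [hAdef, hset, Algebra.adjoin_range_eq_range_aeval]
  -- the specialization x ↦ 0, z ↦ 0
  set σ : MvPolynomial (Fin 4) ℂ →ₐ[ℂ] MvPolynomial (Fin 2) ℂ :=
    aeval ![0, X 0, 0, X 1] with hσ
  have hσx : σ x = 0 := by rw [hx, hσ]; simp
  have hσy : σ y = X 0 := by rw [hy, hσ]; simp
  have hσv : σ v = X 0 ^ 2 * X 1 := by
    rw [hv, hp, hx, hy, hz, hu, hσ]; simp; ring
  have hσw : σ w = -(X 0 ^ 3 * X 1 ^ 2) := by
    rw [hw, hp, hx, hy, hz, hu, hσ]; simp; ring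
  have hfun : (fun i => σ (![y, v, w] i))
      = ![X 0, X 0 ^ 2 * X 1, -(X 0 ^ 3 * X 1 ^ 2)] := by
    funext i
    fin_cases i <;> simp [hσy, hσv, hσw]
  have hcomp : ∀ F : MvPolynomial (Fin 3) ℂ, σ (aeval ![y, v, w] F) = chi F := by
    intro F
    have h1 : σ (aeval ![y, v, w] F) = (σ.comp (aeval ![y, v, w])) F := rfl
    rw [h1, MvPolynomial.comp_aeval, hfun, chi]
  have hqeval : aeval ![y, v, w] q3 = y * w + v ^ 2 := by
    simp [q3]
  -- membership of generators in A
  have hyA : y ∈ A := hAdef ▸ Algebra.subset_adjoin (by simp)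
  have hvA : v ∈ A := hAdef ▸ Algebra.subset_adjoin (by simp)
  have hwA : w ∈ A := hAdef ▸ Algebra.subset_adjoin (by simp)
  have hqA : y * w + v ^ 2 ∈ A := add_mem (mul_mem hyA hwA) (pow_mem hvA 2)
  -- key hard direction
  have key : ∀ f : MvPolynomial (Fin 4) ℂ, f ∈ A → f ∈ Ideal.span ({x} : Set _) →
      ∃ g ∈ A, f = (y * w + v ^ 2) * g := by
    intro f hfA hfx
    rw [hA] at hfA
    obtain ⟨F, hF0⟩ := hfA
    have hF : aeval ![y, v, w] F = f := hF0
    obtain ⟨G, R, hGR, hRS⟩ := div3 F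
    set g := aeval ![y, v, w] G with hg
    set r := aeval ![y, v, w] R with hr
    have hfr : f = (y * w + v ^ 2) * g + r := by
      rw [← hF, hGR, map_add, map_mul, hqeval]
    have hqx : (y * w + v ^ 2) * g ∈ Ideal.span ({x} : Set (MvPolynomial (Fin 4) ℂ)) :=
      Ideal.mem_span_singleton.mpr ⟨x * p * g, by rw [hyvw]; ring⟩
    have hrx : r ∈ Ideal.span ({x} : Set (MvPolynomial (Fin 4) ℂ)) := by
      have : r = f - (y * w + v ^ 2) * g := by rw [hfr]; ring
      rw [this]
      exact Ideal.sub_mem _ hfx hqx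
    obtain ⟨h', hh'⟩ := Ideal.mem_span_singleton.mp hrx
    have hσr : σ r = 0 := by rw [hh', map_mul, hσx, zero_mul]
    have hchiR : chi R = 0 := by rw [← hcomp R, ← hr, hσr]
    have hR0 : R = 0 := chi_zero R hRS hchiR
    have hr0 : r = 0 := by rw [hr, hR0, map_zero]
    refine ⟨g, ?_, ?_⟩
    · rw [hA]; exact ⟨G, rfl⟩
    · rw [hfr, hr0, add_zero]
  constructor
  · ext f
    simp only [Set.mem_setOf_eq]
    constructor
    · rintro ⟨hfA, hfx⟩
      obtain ⟨g, hgA, hfg⟩ := key f hfA hfx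
      refine ⟨hfA, Ideal.mem_span_singleton.mpr ⟨p * g, by rw [hfg, hyvw]; ring⟩⟩
    · rintro ⟨hfA, hfx2⟩
      refine ⟨hfA, ?_⟩
      obtain ⟨h', hh'⟩ := Ideal.mem_span_singleton.mp hfx2
      exact Ideal.mem_span_singleton.mpr ⟨x * h', by rw [hh']; ring⟩
  · ext f
    simp only [Set.mem_setOf_eq]
    constructor
    · rintro ⟨hfA, hfx⟩
      exact key f hfA hfx
    · rintro ⟨g, hgA, rfl⟩
      refine ⟨mul_mem hqA hgA, Ideal.mem_span_singleton.mpr ⟨x * p * g, by rw [hyvw]; ring⟩⟩
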